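/- Let S be a minimal odd cycle transversal of a graph G and let (X, Y) be a bipartition of the bipartite graph G - S chosen so that X has maximum size. Then X is a maximal independent set of G and Y is a maximal independent set of G - X. -/

import Mathlib

open SimpleGraph

namespace Paper

variable {V : Type*}

/-- `S` is an independent set of `G`. -/
def IsIndep (G : SimpleGraph V) (S : Set V) : Prop :=
  S.Pairwise fun a b => ¬ G.Adj a b

/-- `S` is a maximal independent set of `G`. -/
def IsMaxIndep (G : SimpleGraph V) (S : Set V) : Prop :=
  IsIndep G S ∧ ∀ v ∉ S, ¬ IsIndep G (insert v S)

/-- `S` is a maximal independent set of the subgraph of `G` induced by `W`. -/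
def IsMaxIndepIn (G : SimpleGraph V) (W S : Set V) : Prop :=
  S ⊆ W ∧ IsIndep G S ∧ ∀ v ∈ W, v ∉ S → ∃ w ∈ S, G.Adj v w

/-- `S` is an odd cycle transversal of `G`: deleting `S` leaves a bipartite graph. -/
def IsOCT (G : SimpleGraph V) (S : Set V) : Prop :=
  (G.induce (Sᶜ : Set V)).Colorable 2

/-- `S` is a minimal odd cycle transversal of `G`. -/
def IsMinOCT (G : SimpleGraph V) (S : Set V) : Prop :=
  IsOCT G S ∧ ∀ T ⊂ S, ¬ IsOCT G T

/-- `S` is a feedback vertex set of `G`: deleting `S` leaves a forest. -/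
def IsFVS (G : SimpleGraph V) (S : Set V) : Prop :=
  (G.induce (Sᶜ : Set V)).IsAcyclic

/-- `S` is a minimal feedback vertex set of `G`. -/
def IsMinFVS (G : SimpleGraph V) (S : Set V) : Prop :=
  IsFVS G S ∧ ∀ T ⊂ S, ¬ IsFVS G T

/-- `S` is a vertex cover of `G`. -/
def IsVC (G : SimpleGraph V) (S : Set V) : Prop :=
  ∀ ⦃a b⦄, G.Adj a b → a ∈ S ∨ b ∈ S

/-- `S` induces a connected subgraph of `G`. -/
def ConnSet (G : SimpleGraph V) (S : Set V) : Prop :=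
  (G.induce S).Connected

/-- The graph `sP₂`: the disjoint union of `s` copies of an edge. -/
def sP2 (s : ℕ) : SimpleGraph (Fin s × Fin 2) where
  Adj p q := p.1 = q.1 ∧ p.2 ≠ q.2
  symm := ⟨by intro _ _ h; exact ⟨h.1.symm, h.2.symm⟩⟩
  loopless := ⟨by intro _ h; exact h.2 rfl⟩

/-- `G` contains an induced subgraph isomorphic to `H`. -/
def HasInducedIso {W : Type*} (G : SimpleGraph V) (H : SimpleGraph W) : Prop :=
  ∃ T : Set V, Nonempty (G.induce T ≃g H)

/-- `G` is `sP₂`-free. -/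
def sP2Free (s : ℕ) (G : SimpleGraph V) : Prop :=
  ¬ HasInducedIso G (sP2 s)

/-- `G` is claw-free: it has no induced `K_{1,3}`. -/
def ClawFree (G : SimpleGraph V) : Prop :=
  ¬ HasInducedIso G (completeBipartiteGraph (Fin 1) (Fin 3))

/-- `G` has an even cycle factor: a spanning 2-regular subgraph with no odd cycle. -/
def HasEvenCycleFactor (G : SimpleGraph V) : Prop :=
  ∃ H : SimpleGraph V, H ≤ G ∧ (∀ v, (H.neighborSet v).ncard = 2) ∧ H.Colorable 2

/-- The number of neighbours of `v` inside the set `F`. -/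
noncomputable def degIn (G : SimpleGraph V) (F : Set V) (v : V) : ℕ :=
  {w | w ∈ F ∧ G.Adj v w}.ncard

/-- `{x, y}` is a component of `G[F]` isomorphic to `P₂`. -/
def IsP2Comp (G : SimpleGraph V) (F : Set V) (x y : V) : Prop :=
  x ∈ F ∧ y ∈ F ∧ G.Adj x y ∧
  (∀ w ∈ F, G.Adj x w → w = y) ∧ (∀ w ∈ F, G.Adj y w → w = x)

/-- `F'` is a skeleton of the forest `G[F]`: all vertices of degree at least 2 in `G[F]`
together with exactly one vertex from each `P₂`-component. -/
def IsSkeleton (G : SimpleGraph V) (F F' : Set V) : Prop :=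
  F' ⊆ F ∧ (∀ v ∈ F, 2 ≤ degIn G F v → v ∈ F') ∧
  (∀ v ∈ F', 2 ≤ degIn G F v ∨ ∃ y, IsP2Comp G F v y) ∧
  (∀ x y, IsP2Comp G F x y → (x ∈ F' ↔ y ∉ F'))

/-- A bipartition `(X, Y)` of the subgraph of `G` induced by the vertex set `W`. -/
def IsBipartitionOf (G : SimpleGraph V) (W X Y : Set V) : Prop :=
  X ∪ Y = W ∧ Disjoint X Y ∧ IsIndep G X ∧ IsIndep G Y

lemma indep_insert {G : SimpleGraph V} {X : Set V} {v : V} (hX : IsIndep G X)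
    (h : ∀ w ∈ X, ¬ G.Adj v w) : IsIndep G (insert v X) := by
  intro a ha b hb hab
  rcases ha with rfl | ha <;> rcases hb with rfl | hb
  · exact absurd rfl hab
  · exact h b hb
  · exact fun hadj => h a ha hadj.symm
  · exact hX ha hb hab

lemma colorable_of_cover (G : SimpleGraph V) (W X Y : Set V) (hcov : W ⊆ X ∪ Y)
    (hX : IsIndep G X) (hY : IsIndep G Y) : (G.induce W).Colorable 2 := by
  classical
  refine ⟨SimpleGraph.Coloring.mk (fun w => if (w : V) ∈ X then 0 else 1) ?_⟩
  rintro ⟨a, ha⟩ ⟨b, hb⟩ hab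
  have hadj : G.Adj a b := hab
  have hne : a ≠ b := hadj.ne
  by_cases haX : a ∈ X <;> by_cases hbX : b ∈ X
  · exact absurd hadj (hX haX hbX hne)
  · simp [haX, hbX]
  · simp [haX, hbX]
  · have haY : a ∈ Y := (hcov ha).resolve_left haX
    have hbY : b ∈ Y := (hcov hb).resolve_left hbX
    exact absurd hadj (hY haY hbY hne)

/-- If `S` is a minimal odd cycle transversal of `G` and `(X, Y)` is a bipartition
of `G - S` with `X` of maximum size, then `X` is a maximal independent set of `G` and `Y` is a
maximal independent set of `G - X`. -/
theorem min_oct_bipartition_max_indep {V : Type*} [Fintype V] (G : SimpleGraph V) (S : Set V)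
    (hS : IsMinOCT G S) (X Y : Set V) (hXY : IsBipartitionOf G (Sᶜ : Set V) X Y)
    (hmax : ∀ X' Y' : Set V, IsBipartitionOf G (Sᶜ : Set V) X' Y' → X'.ncard ≤ X.ncard) :
    IsMaxIndep G X ∧ IsMaxIndepIn G (Xᶜ : Set V) Y := by
  classical
  obtain ⟨hunion, hdisj, hXind, hYind⟩ := hXY
  -- key: a vertex of S without neighbour in X gives a smaller OCT
  have keyX : ∀ v ∈ S, (∀ w ∈ X, ¬ G.Adj v w) → False := by
    intro v hv hno
    have hsub : S \ {v} ⊂ S := Set.sdiff_singleton_ssubset.mpr hv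
    refine hS.2 _ hsub ?_
    refine colorable_of_cover G _ (insert v X) Y ?_ (indep_insert hXind hno) hYind
    intro a ha
    by_cases hav : a = v
    · exact Or.inl (hav ▸ Set.mem_insert v X)
    · have : a ∈ Sᶜ := fun haS => ha ⟨haS, hav⟩
      rcases (hunion ▸ this) with h | h
      · exact Or.inl (Set.mem_insert_of_mem _ h)
      · exact Or.inr h
  have keyY : ∀ v ∈ S, (∀ w ∈ Y, ¬ G.Adj v w) → False := by
    intro v hv hno
    have hsub : S \ {v} ⊂ S := Set.sdiff_singleton_ssubset.mpr hv
    refine hS.2 _ hsub ?_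
    refine colorable_of_cover G _ X (insert v Y) ?_ hXind (indep_insert hYind hno)
    intro a ha
    by_cases hav : a = v
    · exact Or.inr (hav ▸ Set.mem_insert v Y)
    · have : a ∈ Sᶜ := fun haS => ha ⟨haS, hav⟩
      rcases (hunion ▸ this) with h | h
      · exact Or.inl h
      · exact Or.inr (Set.mem_insert_of_mem _ h)
  -- a vertex of Y without neighbour in X contradicts maximality of X
  have keyMax : ∀ v ∈ Y, (∀ w ∈ X, ¬ G.Adj v w) → False := by
    intro v hv hno
    have hvX : v ∉ X := fun hvx => hdisj.ne_of_mem hvx hv rfl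
    have hbip : IsBipartitionOf G (Sᶜ : Set V) (insert v X) (Y \ {v}) := by
      refine ⟨?_, ?_, indep_insert hXind hno, fun a ha b hb hab => hYind ha.1 hb.1 hab⟩
      · rw [← hunion]
        ext a
        simp only [Set.mem_union, Set.mem_insert_iff, Set.mem_diff, Set.mem_singleton_iff]
        constructor
        · rintro ((rfl | h) | ⟨h, _⟩)
          · exact Or.inr hv
          · exact Or.inl h
          · exact Or.inr h
        · rintro (h | h)
          · exact Or.inl (Or.inr h)
          · by_cases hav : a = v
            · exact Or.inl (Or.inl hav)
            · exact Or.inr ⟨h, hav⟩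
      · refine Set.disjoint_left.mpr ?_
        rintro a (rfl | ha) hb
        · exact hb.2 rfl
        · exact hdisj.ne_of_mem ha hb.1 rfl
    have := hmax _ _ hbip
    have hfin : X.Finite := Set.toFinite X
    rw [Set.ncard_insert_of_notMem hvX hfin] at this
    omega
  constructor
  · refine ⟨hXind, fun v hv hind => ?_⟩
    have hno : ∀ w ∈ X, ¬ G.Adj v w := by
      intro w hw
      exact hind (Set.mem_insert v X) (Set.mem_insert_of_mem _ hw)
        (fun h => hv (h ▸ hw))
    by_cases hvS : v ∈ S
    · exact keyX v hvS hno
    · have : v ∈ X ∪ Y := hunion ▸ hvS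
      exact keyMax v (this.resolve_left hv) hno
  · refine ⟨fun a ha => fun haX => hdisj.ne_of_mem haX ha rfl, hYind, ?_⟩
    intro v hvX hvY
    by_contra hno
    push_neg at hno
    have hvS : v ∈ S := by
      by_contra hvS
      have hv' : v ∈ X ∪ Y := hunion ▸ (hvS : v ∈ Sᶜ)
      rcases hv' with h | h
      · exact hvX h
      · exact hvY h
    exact keyY v hvS (fun w hw hadj => hno w hw hadj)
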